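/- The solution of the ODE p'(t) = −κ p(t) + γ e^{−γ(t−t₀)}(1 − p(t)) with p(t₀) = 0 satisfies 0 ≤ p(t) ≤ 1 for all t ≥ t₀ (the expected photon number in the cavity driven by a single photon is a probability). -/

import Mathlib

lemma mono_aux (t₀ : ℝ) (f f' : ℝ → ℝ)
    (hf : ∀ t, t₀ ≤ t → HasDerivAt f (f' t) t)
    (h0 : ∀ t, t₀ ≤ t → 0 ≤ f' t) : MonotoneOn f (Set.Ici t₀) := by
  apply monotoneOn_of_deriv_nonneg (convex_Ici t₀)
  · exact fun t ht => ((hf t ht).continuousAt).continuousWithinAt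
  · intro t ht
    rw [interior_Ici] at ht
    exact ((hf t ht.le).differentiableAt).differentiableWithinAt
  · intro t ht
    rw [interior_Ici] at ht
    rw [(hf t ht.le).deriv]
    exact h0 t ht.le

theorem excitation_probability_bounds (κ γ t₀ : ℝ) (hκ : 0 < κ) (hγ : 0 < γ)
    (p : ℝ → ℝ)
    (hp : ∀ t, t₀ ≤ t →
      HasDerivAt p (-κ * p t + γ * Real.exp (-γ * (t - t₀)) * (1 - p t)) t)
    (hp0 : p t₀ = 0) :
    ∀ t, t₀ ≤ t → 0 ≤ p t ∧ p t ≤ 1 := by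
  set E : ℝ → ℝ := fun t => Real.exp (-γ * (t - t₀)) with hE
  set K : ℝ → ℝ := fun t => κ * t - Real.exp (-γ * (t - t₀)) with hK
  have hKd : ∀ t : ℝ, HasDerivAt K (κ + γ * E t) t := by
    intro t
    have h1 : HasDerivAt (fun t : ℝ => κ * t) κ t := by
      simpa using (hasDerivAt_id t).const_mul κ
    have h2 : HasDerivAt (fun t : ℝ => -γ * (t - t₀)) (-γ) t := by
      simpa using ((hasDerivAt_id t).sub_const t₀).const_mul (-γ)
    have h3 : HasDerivAt (fun t : ℝ => Real.exp (-γ * (t - t₀)))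
        (Real.exp (-γ * (t - t₀)) * (-γ)) t := h2.exp
    have := h1.sub h3
    refine this.congr_deriv ?_
    simp [hE]
    ring
  -- q = p * exp K is monotone
  have hq : ∀ t, t₀ ≤ t →
      HasDerivAt (fun t => p t * Real.exp (K t))
        (Real.exp (K t) * (γ * E t)) t := by
    intro t ht
    have := (hp t ht).mul (hKd t).exp
    refine this.congr_deriv ?_
    simp only [hE]
    ring
  have hqmono : MonotoneOn (fun t => p t * Real.exp (K t)) (Set.Ici t₀) := by
    refine mono_aux t₀ _ (fun t => Real.exp (K t) * (γ * E t)) hq ?_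
    intro t ht
    positivity
  have hnonneg : ∀ t, t₀ ≤ t → 0 ≤ p t := by
    intro t ht
    have := hqmono (Set.self_mem_Ici) ht ht
    simp only [hp0, zero_mul] at this
    have hexp : 0 < Real.exp (K t) := Real.exp_pos _
    nlinarith
  -- u = (1 - p) * exp (- E) is monotone
  set G : ℝ → ℝ := fun t => -Real.exp (-γ * (t - t₀)) with hG
  have hGd : ∀ t : ℝ, HasDerivAt G (γ * E t) t := by
    intro t
    have h2 : HasDerivAt (fun t : ℝ => -γ * (t - t₀)) (-γ) t := by
      simpa using ((hasDerivAt_id t).sub_const t₀).const_mul (-γ)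
    have h3 := h2.exp
    refine h3.neg.congr_deriv ?_
    simp [hE]; ring
  have hu : ∀ t, t₀ ≤ t →
      HasDerivAt (fun t => (1 - p t) * Real.exp (G t))
        (Real.exp (G t) * (κ * p t)) t := by
    intro t ht
    have hd : HasDerivAt (fun t => 1 - p t)
        (-(-κ * p t + γ * Real.exp (-γ * (t - t₀)) * (1 - p t))) t :=
      ((hp t ht).const_sub 1)
    have := hd.mul (hGd t).exp
    refine this.congr_deriv ?_
    simp only [hE]
    ring
  have humono : MonotoneOn (fun t => (1 - p t) * Real.exp (G t)) (Set.Ici t₀) := by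
    refine mono_aux t₀ _ (fun t => Real.exp (G t) * (κ * p t)) hu ?_
    intro t ht
    have := hnonneg t ht
    positivity
  intro t ht
  refine ⟨hnonneg t ht, ?_⟩
  have := humono (Set.self_mem_Ici) ht ht
  simp only [hp0, sub_zero, one_mul] at this
  have hexp : 0 < Real.exp (G t₀) := Real.exp_pos _
  have hexp2 : 0 < Real.exp (G t) := Real.exp_pos _
  nlinarith
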